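/- The polytope Δ ⊆ ℝ⁴ defined by a_1,a_2,a_3,a_4 ≥ 0, a_2 ≤ 1, a_4 ≤ 1, a_1 ≤ 1 + a_4 − a_2, a_3 ≤ 2 − a_2 − a_4 is an integral polytope (all vertices in ℤ⁴) with exactly 12 vertices, and its Euclidean volume equals 1. -/

import Mathlib

open Set MeasureTheory

def Dset : Set (Fin 4 → ℝ) := {a | (∀ i, 0 ≤ a i) ∧ a 1 ≤ 1 ∧ a 3 ≤ 1 ∧
      a 0 ≤ 1 + a 3 - a 1 ∧ a 2 ≤ 2 - a 1 - a 3}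

def VS : Set (Fin 4 → ℝ) :=
  {![0,0,0,0], ![1,0,0,0], ![0,0,2,0], ![1,0,2,0], ![0,0,0,1], ![2,0,0,1],
   ![0,0,1,1], ![2,0,1,1], ![0,1,0,0], ![0,1,1,0], ![0,1,0,1], ![1,1,0,1]}

lemma mem_Dset_of (y : Fin 4 → ℝ) (h0 : 0 ≤ y 0) (h1 : 0 ≤ y 1) (h2 : 0 ≤ y 2)
    (h3 : 0 ≤ y 3) (h4 : y 1 ≤ 1) (h5 : y 3 ≤ 1) (h6 : y 0 ≤ 1 + y 3 - y 1)
    (h7 : y 2 ≤ 2 - y 1 - y 3) : y ∈ Dset :=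
  ⟨fun i => by fin_cases i <;> assumption, h4, h5, h6, h7⟩

lemma pert {x : Fin 4 → ℝ} (hx : x ∈ Set.extremePoints ℝ Dset) (y z : Fin 4 → ℝ)
    (hy : y ∈ Dset) (hz : z ∈ Dset) (hmid : ∀ i, x i = 1/2 * y i + 1/2 * z i) :
    y = x := by
  have hseg : x ∈ openSegment ℝ y z := by
    refine ⟨1/2, 1/2, by norm_num, by norm_num, by norm_num, ?_⟩
    funext i
    have := hmid i
    simp only [Pi.add_apply, Pi.smul_apply, smul_eq_mul]
    linarith
  exact hx.2 hy hz hseg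

set_option maxHeartbeats 2000000 in
lemma classify {x : Fin 4 → ℝ} (hx : x ∈ Set.extremePoints ℝ Dset) :
    (x 1 = 0 ∨ x 1 = 1) ∧ (x 3 = 0 ∨ x 3 = 1) ∧
    (x 0 = 0 ∨ x 0 = 1 + x 3 - x 1) ∧ (x 2 = 0 ∨ x 2 = 2 - x 1 - x 3) := by
  obtain ⟨hx0, hx1, hx3, hx4, hx5⟩ := hx.1
  have hb0 := hx0 0
  have hb1 := hx0 1
  have hb2 := hx0 2
  have hb3 := hx0 3
  refine ⟨?_, ?_, ?_, ?_⟩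
  · -- x 1 ∈ {0, 1}
    by_contra hc
    push_neg at hc
    have h0 : 0 < x 1 := hb1.lt_of_ne (Ne.symm hc.1)
    have h1 : x 1 < 1 := lt_of_le_of_ne hx1 hc.2
    have hP : 0 < 1 + x 3 - x 1 := by linarith
    have hQ : 0 < 2 - x 1 - x 3 := by linarith
    set s := x 0 / (1 + x 3 - x 1) with hs_def
    set r := x 2 / (2 - x 1 - x 3) with hr_def
    have hs0 : 0 ≤ s := div_nonneg hb0 hP.le
    have hs1 : s ≤ 1 := (div_le_one hP).2 hx4
    have hr0 : 0 ≤ r := div_nonneg hb2 hQ.le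
    have hr1 : r ≤ 1 := (div_le_one hQ).2 hx5
    have hxs : x 0 = s * (1 + x 3 - x 1) := (div_mul_cancel₀ (x 0) hP.ne').symm
    have hxr : x 2 = r * (2 - x 1 - x 3) := (div_mul_cancel₀ (x 2) hQ.ne').symm
    set ε := min (x 1) (1 - x 1) with hε_def
    have hε : 0 < ε := lt_min h0 (by linarith)
    have hε1 : ε ≤ x 1 := min_le_left _ _
    have hε2 : ε ≤ 1 - x 1 := min_le_right _ _
    have hy : ![x 0 - ε*s, x 1 + ε, x 2 - ε*r, x 3] ∈ Dset :=
      mem_Dset_of _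
        (by show (0:ℝ) ≤ x 0 - ε*s
            nlinarith [mul_nonneg hs0 (by linarith : (0:ℝ) ≤ 1 + x 3 - x 1 - ε)])
        (by show (0:ℝ) ≤ x 1 + ε; linarith)
        (by show (0:ℝ) ≤ x 2 - ε*r
            nlinarith [mul_nonneg hr0 (by linarith : (0:ℝ) ≤ 2 - x 1 - x 3 - ε)])
        (by show (0:ℝ) ≤ x 3; linarith)
        (by show x 1 + ε ≤ 1; linarith)
        (by show x 3 ≤ 1; linarith)
        (by show x 0 - ε*s ≤ 1 + x 3 - (x 1 + ε)
            nlinarith [mul_nonneg (by linarith : (0:ℝ) ≤ 1 - s) (by linarith : (0:ℝ) ≤ 1 + x 3 - x 1 - ε)])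
        (by show x 2 - ε*r ≤ 2 - (x 1 + ε) - x 3
            nlinarith [mul_nonneg (by linarith : (0:ℝ) ≤ 1 - r) (by linarith : (0:ℝ) ≤ 2 - x 1 - x 3 - ε)])
    have hz : ![x 0 + ε*s, x 1 - ε, x 2 + ε*r, x 3] ∈ Dset :=
      mem_Dset_of _
        (by show (0:ℝ) ≤ x 0 + ε*s; nlinarith [mul_nonneg hs0 hε.le])
        (by show (0:ℝ) ≤ x 1 - ε; linarith)
        (by show (0:ℝ) ≤ x 2 + ε*r; nlinarith [mul_nonneg hr0 hε.le])
        (by show (0:ℝ) ≤ x 3; linarith)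
        (by show x 1 - ε ≤ 1; linarith)
        (by show x 3 ≤ 1; linarith)
        (by show x 0 + ε*s ≤ 1 + x 3 - (x 1 - ε)
            nlinarith [mul_nonneg (by linarith : (0:ℝ) ≤ 1 - s) (by linarith : (0:ℝ) ≤ 1 + x 3 - x 1 + ε)])
        (by show x 2 + ε*r ≤ 2 - (x 1 - ε) - x 3
            nlinarith [mul_nonneg (by linarith : (0:ℝ) ≤ 1 - r) (by linarith : (0:ℝ) ≤ 2 - x 1 - x 3 + ε)])
    have heq := pert hx _ _ hy hz ?_
    · have : x 1 + ε = x 1 := congrFun heq 1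
      linarith
    · intro i
      fin_cases i
      · show x 0 = 1/2 * (x 0 - ε*s) + 1/2 * (x 0 + ε*s); ring
      · show x 1 = 1/2 * (x 1 + ε) + 1/2 * (x 1 - ε); ring
      · show x 2 = 1/2 * (x 2 - ε*r) + 1/2 * (x 2 + ε*r); ring
      · show x 3 = 1/2 * (x 3) + 1/2 * (x 3); ring
  · -- x 3 ∈ {0, 1}
    by_contra hc
    push_neg at hc
    have h0 : 0 < x 3 := hb3.lt_of_ne (Ne.symm hc.1)
    have h1 : x 3 < 1 := lt_of_le_of_ne hx3 hc.2
    have hP : 0 < 1 + x 3 - x 1 := by linarith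
    have hQ : 0 < 2 - x 1 - x 3 := by linarith
    set s := x 0 / (1 + x 3 - x 1) with hs_def
    set r := x 2 / (2 - x 1 - x 3) with hr_def
    have hs0 : 0 ≤ s := div_nonneg hb0 hP.le
    have hs1 : s ≤ 1 := (div_le_one hP).2 hx4
    have hr0 : 0 ≤ r := div_nonneg hb2 hQ.le
    have hr1 : r ≤ 1 := (div_le_one hQ).2 hx5
    have hxs : x 0 = s * (1 + x 3 - x 1) := (div_mul_cancel₀ (x 0) hP.ne').symm
    have hxr : x 2 = r * (2 - x 1 - x 3) := (div_mul_cancel₀ (x 2) hQ.ne').symm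
    set ε := min (x 3) (1 - x 3) with hε_def
    have hε : 0 < ε := lt_min h0 (by linarith)
    have hε1 : ε ≤ x 3 := min_le_left _ _
    have hε2 : ε ≤ 1 - x 3 := min_le_right _ _
    have hy : ![x 0 + ε*s, x 1, x 2 - ε*r, x 3 + ε] ∈ Dset :=
      mem_Dset_of _
        (by show (0:ℝ) ≤ x 0 + ε*s; nlinarith [mul_nonneg hs0 hε.le])
        (by show (0:ℝ) ≤ x 1; linarith)
        (by show (0:ℝ) ≤ x 2 - ε*r
            nlinarith [mul_nonneg hr0 (by linarith : (0:ℝ) ≤ 2 - x 1 - x 3 - ε)])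
        (by show (0:ℝ) ≤ x 3 + ε; linarith)
        (by show x 1 ≤ 1; linarith)
        (by show x 3 + ε ≤ 1; linarith)
        (by show x 0 + ε*s ≤ 1 + (x 3 + ε) - x 1
            nlinarith [mul_nonneg (by linarith : (0:ℝ) ≤ 1 - s) (by linarith : (0:ℝ) ≤ 1 + x 3 - x 1 + ε)])
        (by show x 2 - ε*r ≤ 2 - x 1 - (x 3 + ε)
            nlinarith [mul_nonneg (by linarith : (0:ℝ) ≤ 1 - r) (by linarith : (0:ℝ) ≤ 2 - x 1 - x 3 - ε)])
    have hz : ![x 0 - ε*s, x 1, x 2 + ε*r, x 3 - ε] ∈ Dset :=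
      mem_Dset_of _
        (by show (0:ℝ) ≤ x 0 - ε*s
            nlinarith [mul_nonneg hs0 (by linarith : (0:ℝ) ≤ 1 + x 3 - x 1 - ε)])
        (by show (0:ℝ) ≤ x 1; linarith)
        (by show (0:ℝ) ≤ x 2 + ε*r; nlinarith [mul_nonneg hr0 hε.le])
        (by show (0:ℝ) ≤ x 3 - ε; linarith)
        (by show x 1 ≤ 1; linarith)
        (by show x 3 - ε ≤ 1; linarith)
        (by show x 0 - ε*s ≤ 1 + (x 3 - ε) - x 1
            nlinarith [mul_nonneg (by linarith : (0:ℝ) ≤ 1 - s) (by linarith : (0:ℝ) ≤ 1 + x 3 - x 1 - ε)])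
        (by show x 2 + ε*r ≤ 2 - x 1 - (x 3 - ε)
            nlinarith [mul_nonneg (by linarith : (0:ℝ) ≤ 1 - r) (by linarith : (0:ℝ) ≤ 2 - x 1 - x 3 + ε)])
    have heq := pert hx _ _ hy hz ?_
    · have : x 3 + ε = x 3 := congrFun heq 3
      linarith
    · intro i
      fin_cases i
      · show x 0 = 1/2 * (x 0 + ε*s) + 1/2 * (x 0 - ε*s); ring
      · show x 1 = 1/2 * (x 1) + 1/2 * (x 1); ring
      · show x 2 = 1/2 * (x 2 - ε*r) + 1/2 * (x 2 + ε*r); ring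
      · show x 3 = 1/2 * (x 3 + ε) + 1/2 * (x 3 - ε); ring
  · -- x 0 ∈ {0, 1 + x 3 - x 1}
    by_contra hc
    push_neg at hc
    have h0 : 0 < x 0 := hb0.lt_of_ne (Ne.symm hc.1)
    have h1 : x 0 < 1 + x 3 - x 1 := lt_of_le_of_ne hx4 hc.2
    set ε := min (x 0) (1 + x 3 - x 1 - x 0) with hε_def
    have hε : 0 < ε := lt_min h0 (by linarith)
    have hε1 : ε ≤ x 0 := min_le_left _ _
    have hε2 : ε ≤ 1 + x 3 - x 1 - x 0 := min_le_right _ _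
    have hy : ![x 0 + ε, x 1, x 2, x 3] ∈ Dset :=
      mem_Dset_of _
        (by show (0:ℝ) ≤ x 0 + ε; linarith)
        (by show (0:ℝ) ≤ x 1; linarith)
        (by show (0:ℝ) ≤ x 2; linarith)
        (by show (0:ℝ) ≤ x 3; linarith)
        (by show x 1 ≤ 1; linarith)
        (by show x 3 ≤ 1; linarith)
        (by show x 0 + ε ≤ 1 + x 3 - x 1; linarith)
        (by show x 2 ≤ 2 - x 1 - x 3; linarith)
    have hz : ![x 0 - ε, x 1, x 2, x 3] ∈ Dset :=
      mem_Dset_of _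
        (by show (0:ℝ) ≤ x 0 - ε; linarith)
        (by show (0:ℝ) ≤ x 1; linarith)
        (by show (0:ℝ) ≤ x 2; linarith)
        (by show (0:ℝ) ≤ x 3; linarith)
        (by show x 1 ≤ 1; linarith)
        (by show x 3 ≤ 1; linarith)
        (by show x 0 - ε ≤ 1 + x 3 - x 1; linarith)
        (by show x 2 ≤ 2 - x 1 - x 3; linarith)
    have heq := pert hx _ _ hy hz ?_
    · have : x 0 + ε = x 0 := congrFun heq 0
      linarith
    · intro i
      fin_cases i
      · show x 0 = 1/2 * (x 0 + ε) + 1/2 * (x 0 - ε); ring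
      · show x 1 = 1/2 * (x 1) + 1/2 * (x 1); ring
      · show x 2 = 1/2 * (x 2) + 1/2 * (x 2); ring
      · show x 3 = 1/2 * (x 3) + 1/2 * (x 3); ring
  · -- x 2 ∈ {0, 2 - x 1 - x 3}
    by_contra hc
    push_neg at hc
    have h0 : 0 < x 2 := hb2.lt_of_ne (Ne.symm hc.1)
    have h1 : x 2 < 2 - x 1 - x 3 := lt_of_le_of_ne hx5 hc.2
    set ε := min (x 2) (2 - x 1 - x 3 - x 2) with hε_def
    have hε : 0 < ε := lt_min h0 (by linarith)
    have hε1 : ε ≤ x 2 := min_le_left _ _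
    have hε2 : ε ≤ 2 - x 1 - x 3 - x 2 := min_le_right _ _
    have hy : ![x 0, x 1, x 2 + ε, x 3] ∈ Dset :=
      mem_Dset_of _
        (by show (0:ℝ) ≤ x 0; linarith)
        (by show (0:ℝ) ≤ x 1; linarith)
        (by show (0:ℝ) ≤ x 2 + ε; linarith)
        (by show (0:ℝ) ≤ x 3; linarith)
        (by show x 1 ≤ 1; linarith)
        (by show x 3 ≤ 1; linarith)
        (by show x 0 ≤ 1 + x 3 - x 1; linarith)
        (by show x 2 + ε ≤ 2 - x 1 - x 3; linarith)
    have hz : ![x 0, x 1, x 2 - ε, x 3] ∈ Dset :=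
      mem_Dset_of _
        (by show (0:ℝ) ≤ x 0; linarith)
        (by show (0:ℝ) ≤ x 1; linarith)
        (by show (0:ℝ) ≤ x 2 - ε; linarith)
        (by show (0:ℝ) ≤ x 3; linarith)
        (by show x 1 ≤ 1; linarith)
        (by show x 3 ≤ 1; linarith)
        (by show x 0 ≤ 1 + x 3 - x 1; linarith)
        (by show x 2 - ε ≤ 2 - x 1 - x 3; linarith)
    have heq := pert hx _ _ hy hz ?_
    · have : x 2 + ε = x 2 := congrFun heq 2
      linarith
    · intro i
      fin_cases i
      · show x 0 = 1/2 * (x 0) + 1/2 * (x 0); ring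
      · show x 1 = 1/2 * (x 1) + 1/2 * (x 1); ring
      · show x 2 = 1/2 * (x 2 + ε) + 1/2 * (x 2 - ε); ring
      · show x 3 = 1/2 * (x 3) + 1/2 * (x 3); ring


lemma comb_bot {t1 t2 y z : ℝ} (h1 : 0 < t1) (h2 : 0 < t2) (hy : 0 ≤ y) (hz : 0 ≤ z)
    (h : t1*y + t2*z = 0) : y = 0 ∧ z = 0 := by
  constructor <;> nlinarith [mul_nonneg h1.le hy, mul_nonneg h2.le hz]

lemma comb_top {t1 t2 y z c : ℝ} (h1 : 0 < t1) (h2 : 0 < t2) (hs : t1 + t2 = 1)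
    (hy : y ≤ c) (hz : z ≤ c) (h : t1*y + t2*z = c) : y = c ∧ z = c := by
  have key : t1*(c-y) + t2*(c-z) = 0 := by linear_combination c * hs - h
  have k1 : t1*(c-y) = 0 ∧ t2*(c-z) = 0 :=
    (add_eq_zero_iff_of_nonneg (mul_nonneg h1.le (sub_nonneg.2 hy))
      (mul_nonneg h2.le (sub_nonneg.2 hz))).1 key
  constructor
  · have := (mul_eq_zero.1 k1.1).resolve_left h1.ne'
    linarith
  · have := (mul_eq_zero.1 k1.2).resolve_left h2.ne'
    linarith

lemma mem_extreme_of (p : Fin 4 → ℝ) (hp : p ∈ Dset)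
    (h1 : p 1 = 0 ∨ p 1 = 1) (h3 : p 3 = 0 ∨ p 3 = 1)
    (h0 : p 0 = 0 ∨ p 0 = 1 + p 3 - p 1) (h2 : p 2 = 0 ∨ p 2 = 2 - p 1 - p 3) :
    p ∈ Set.extremePoints ℝ Dset := by
  refine ⟨hp, ?_⟩
  rintro y hy z hz hseg
  obtain ⟨t1, t2, ht1, ht2, hsum, heq⟩ := hseg
  have hco : ∀ i, t1 * y i + t2 * z i = p i := by
    intro i
    have := congrFun heq i
    simpa using this
  obtain ⟨hy0, hy1, hy3, hy4, hy5⟩ := hy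
  obtain ⟨hz0, hz1, hz3, hz4, hz5⟩ := hz
  have e1 : y 1 = p 1 ∧ z 1 = p 1 := by
    rcases h1 with h | h <;> rw [h]
    · exact comb_bot ht1 ht2 (hy0 1) (hz0 1) (h ▸ hco 1)
    · exact comb_top ht1 ht2 hsum hy1 hz1 (h ▸ hco 1)
  have e3 : y 3 = p 3 ∧ z 3 = p 3 := by
    rcases h3 with h | h <;> rw [h]
    · exact comb_bot ht1 ht2 (hy0 3) (hz0 3) (h ▸ hco 3)
    · exact comb_top ht1 ht2 hsum hy3 hz3 (h ▸ hco 3)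
  have e0 : y 0 = p 0 ∧ z 0 = p 0 := by
    rcases h0 with h | h <;> rw [h]
    · exact comb_bot ht1 ht2 (hy0 0) (hz0 0) (h ▸ hco 0)
    · have hyc : y 0 ≤ 1 + p 3 - p 1 := by rw [← e1.1, ← e3.1]; exact hy4
      have hzc : z 0 ≤ 1 + p 3 - p 1 := by rw [← e1.2, ← e3.2]; exact hz4
      exact comb_top ht1 ht2 hsum hyc hzc (h ▸ hco 0)
  have e2 : y 2 = p 2 ∧ z 2 = p 2 := by
    rcases h2 with h | h <;> rw [h]
    · exact comb_bot ht1 ht2 (hy0 2) (hz0 2) (h ▸ hco 2)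
    · have hyc : y 2 ≤ 2 - p 1 - p 3 := by rw [← e1.1, ← e3.1]; exact hy5
      have hzc : z 2 ≤ 2 - p 1 - p 3 := by rw [← e1.2, ← e3.2]; exact hz5
      exact comb_top ht1 ht2 hsum hyc hzc (h ▸ hco 2)
  funext i; fin_cases i
  exacts [e0.1, e1.1, e2.1, e3.1]

lemma eq_vec {x : Fin 4 → ℝ} {a b c d : ℝ} (h0 : x 0 = a) (h1 : x 1 = b)
    (h2 : x 2 = c) (h3 : x 3 = d) : x = ![a,b,c,d] :=
  funext fun i => by fin_cases i <;> simpa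

set_option maxHeartbeats 1000000 in
lemma extreme_eq : Set.extremePoints ℝ Dset = VS := by
  ext x
  constructor
  · intro hx
    obtain ⟨h1, h3, h0, h2⟩ := classify hx
    rcases h1 with h1 | h1 <;> rcases h3 with h3 | h3 <;>
      rcases h0 with h0 | h0 <;> rcases h2 with h2 | h2
    · have hv : x = (![0,0,0,0] : Fin 4 → ℝ) :=
        eq_vec (by linarith) (by linarith) (by linarith) (by linarith)
      rw [hv]; simp [VS]
    · have hv : x = (![0,0,2,0] : Fin 4 → ℝ) :=
        eq_vec (by linarith) (by linarith) (by linarith) (by linarith)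
      rw [hv]; simp [VS]
    · have hv : x = (![1,0,0,0] : Fin 4 → ℝ) :=
        eq_vec (by linarith) (by linarith) (by linarith) (by linarith)
      rw [hv]; simp [VS]
    · have hv : x = (![1,0,2,0] : Fin 4 → ℝ) :=
        eq_vec (by linarith) (by linarith) (by linarith) (by linarith)
      rw [hv]; simp [VS]
    · have hv : x = (![0,0,0,1] : Fin 4 → ℝ) :=
        eq_vec (by linarith) (by linarith) (by linarith) (by linarith)
      rw [hv]; simp [VS]
    · have hv : x = (![0,0,1,1] : Fin 4 → ℝ) :=
        eq_vec (by linarith) (by linarith) (by linarith) (by linarith)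
      rw [hv]; simp [VS]
    · have hv : x = (![2,0,0,1] : Fin 4 → ℝ) :=
        eq_vec (by linarith) (by linarith) (by linarith) (by linarith)
      rw [hv]; simp [VS]
    · have hv : x = (![2,0,1,1] : Fin 4 → ℝ) :=
        eq_vec (by linarith) (by linarith) (by linarith) (by linarith)
      rw [hv]; simp [VS]
    · have hv : x = (![0,1,0,0] : Fin 4 → ℝ) :=
        eq_vec (by linarith) (by linarith) (by linarith) (by linarith)
      rw [hv]; simp [VS]
    · have hv : x = (![0,1,1,0] : Fin 4 → ℝ) :=
        eq_vec (by linarith) (by linarith) (by linarith) (by linarith)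
      rw [hv]; simp [VS]
    · have hv : x = (![0,1,0,0] : Fin 4 → ℝ) :=
        eq_vec (by linarith) (by linarith) (by linarith) (by linarith)
      rw [hv]; simp [VS]
    · have hv : x = (![0,1,1,0] : Fin 4 → ℝ) :=
        eq_vec (by linarith) (by linarith) (by linarith) (by linarith)
      rw [hv]; simp [VS]
    · have hv : x = (![0,1,0,1] : Fin 4 → ℝ) :=
        eq_vec (by linarith) (by linarith) (by linarith) (by linarith)
      rw [hv]; simp [VS]
    · have hv : x = (![0,1,0,1] : Fin 4 → ℝ) :=
        eq_vec (by linarith) (by linarith) (by linarith) (by linarith)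
      rw [hv]; simp [VS]
    · have hv : x = (![1,1,0,1] : Fin 4 → ℝ) :=
        eq_vec (by linarith) (by linarith) (by linarith) (by linarith)
      rw [hv]; simp [VS]
    · have hv : x = (![1,1,0,1] : Fin 4 → ℝ) :=
        eq_vec (by linarith) (by linarith) (by linarith) (by linarith)
      rw [hv]; simp [VS]
  · intro hx
    simp only [VS, Set.mem_insert_iff, Set.mem_singleton_iff] at hx
    rcases hx with rfl|rfl|rfl|rfl|rfl|rfl|rfl|rfl|rfl|rfl|rfl|rfl <;>
      exact mem_extreme_of _
        (mem_Dset_of _ (by norm_num [Matrix.cons_val_two, Matrix.cons_val_three]) (by norm_num [Matrix.cons_val_two, Matrix.cons_val_three]) (by norm_num [Matrix.cons_val_two, Matrix.cons_val_three]) (by norm_num [Matrix.cons_val_two, Matrix.cons_val_three])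
          (by norm_num [Matrix.cons_val_two, Matrix.cons_val_three]) (by norm_num [Matrix.cons_val_two, Matrix.cons_val_three]) (by norm_num [Matrix.cons_val_two, Matrix.cons_val_three]) (by norm_num [Matrix.cons_val_two, Matrix.cons_val_three]))
        (by norm_num [Matrix.cons_val_two, Matrix.cons_val_three]) (by norm_num [Matrix.cons_val_two, Matrix.cons_val_three]) (by norm_num [Matrix.cons_val_two, Matrix.cons_val_three]) (by norm_num [Matrix.cons_val_two, Matrix.cons_val_three])


set_option maxHeartbeats 1000000 in
lemma VS_ncard : VS.ncard = 12 := by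
  rw [VS]
  rw [Set.ncard_insert_of_notMem (by
    intro h
    simp only [Set.mem_insert_iff, Set.mem_singleton_iff] at h
    rcases h with h|h|h|h|h|h|h|h|h|h|h
    · exact absurd (congrFun h 0) (by norm_num)
    · exact absurd (congrFun h 2) (by norm_num [Matrix.cons_val_two, Matrix.cons_val_three])
    · exact absurd (congrFun h 0) (by norm_num)
    · exact absurd (congrFun h 3) (by norm_num [Matrix.cons_val_two, Matrix.cons_val_three])
    · exact absurd (congrFun h 0) (by norm_num)
    · exact absurd (congrFun h 2) (by norm_num [Matrix.cons_val_two, Matrix.cons_val_three])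
    · exact absurd (congrFun h 0) (by norm_num)
    · exact absurd (congrFun h 1) (by norm_num)
    · exact absurd (congrFun h 1) (by norm_num)
    · exact absurd (congrFun h 1) (by norm_num)
    · exact absurd (congrFun h 0) (by norm_num)
    )]
  rw [Set.ncard_insert_of_notMem (by
    intro h
    simp only [Set.mem_insert_iff, Set.mem_singleton_iff] at h
    rcases h with h|h|h|h|h|h|h|h|h|h
    · exact absurd (congrFun h 0) (by norm_num)
    · exact absurd (congrFun h 2) (by norm_num [Matrix.cons_val_two, Matrix.cons_val_three])
    · exact absurd (congrFun h 0) (by norm_num)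
    · exact absurd (congrFun h 0) (by norm_num)
    · exact absurd (congrFun h 0) (by norm_num)
    · exact absurd (congrFun h 0) (by norm_num)
    · exact absurd (congrFun h 0) (by norm_num)
    · exact absurd (congrFun h 0) (by norm_num)
    · exact absurd (congrFun h 0) (by norm_num)
    · exact absurd (congrFun h 1) (by norm_num)
    )]
  rw [Set.ncard_insert_of_notMem (by
    intro h
    simp only [Set.mem_insert_iff, Set.mem_singleton_iff] at h
    rcases h with h|h|h|h|h|h|h|h|h
    · exact absurd (congrFun h 0) (by norm_num)
    · exact absurd (congrFun h 2) (by norm_num [Matrix.cons_val_two, Matrix.cons_val_three])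
    · exact absurd (congrFun h 0) (by norm_num)
    · exact absurd (congrFun h 2) (by norm_num [Matrix.cons_val_two, Matrix.cons_val_three])
    · exact absurd (congrFun h 0) (by norm_num)
    · exact absurd (congrFun h 1) (by norm_num)
    · exact absurd (congrFun h 1) (by norm_num)
    · exact absurd (congrFun h 1) (by norm_num)
    · exact absurd (congrFun h 0) (by norm_num)
    )]
  rw [Set.ncard_insert_of_notMem (by
    intro h
    simp only [Set.mem_insert_iff, Set.mem_singleton_iff] at h
    rcases h with h|h|h|h|h|h|h|h
    · exact absurd (congrFun h 0) (by norm_num)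
    · exact absurd (congrFun h 0) (by norm_num)
    · exact absurd (congrFun h 0) (by norm_num)
    · exact absurd (congrFun h 0) (by norm_num)
    · exact absurd (congrFun h 0) (by norm_num)
    · exact absurd (congrFun h 0) (by norm_num)
    · exact absurd (congrFun h 0) (by norm_num)
    · exact absurd (congrFun h 1) (by norm_num)
    )]
  rw [Set.ncard_insert_of_notMem (by
    intro h
    simp only [Set.mem_insert_iff, Set.mem_singleton_iff] at h
    rcases h with h|h|h|h|h|h|h
    · exact absurd (congrFun h 0) (by norm_num)
    · exact absurd (congrFun h 2) (by norm_num [Matrix.cons_val_two, Matrix.cons_val_three])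
    · exact absurd (congrFun h 0) (by norm_num)
    · exact absurd (congrFun h 1) (by norm_num)
    · exact absurd (congrFun h 1) (by norm_num)
    · exact absurd (congrFun h 1) (by norm_num)
    · exact absurd (congrFun h 0) (by norm_num)
    )]
  rw [Set.ncard_insert_of_notMem (by
    intro h
    simp only [Set.mem_insert_iff, Set.mem_singleton_iff] at h
    rcases h with h|h|h|h|h|h
    · exact absurd (congrFun h 0) (by norm_num)
    · exact absurd (congrFun h 2) (by norm_num [Matrix.cons_val_two, Matrix.cons_val_three])
    · exact absurd (congrFun h 0) (by norm_num)
    · exact absurd (congrFun h 0) (by norm_num)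
    · exact absurd (congrFun h 0) (by norm_num)
    · exact absurd (congrFun h 0) (by norm_num)
    )]
  rw [Set.ncard_insert_of_notMem (by
    intro h
    simp only [Set.mem_insert_iff, Set.mem_singleton_iff] at h
    rcases h with h|h|h|h|h
    · exact absurd (congrFun h 0) (by norm_num)
    · exact absurd (congrFun h 1) (by norm_num)
    · exact absurd (congrFun h 1) (by norm_num)
    · exact absurd (congrFun h 1) (by norm_num)
    · exact absurd (congrFun h 0) (by norm_num)
    )]
  rw [Set.ncard_insert_of_notMem (by
    intro h
    simp only [Set.mem_insert_iff, Set.mem_singleton_iff] at h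
    rcases h with h|h|h|h
    · exact absurd (congrFun h 0) (by norm_num)
    · exact absurd (congrFun h 0) (by norm_num)
    · exact absurd (congrFun h 0) (by norm_num)
    · exact absurd (congrFun h 0) (by norm_num)
    )]
  rw [Set.ncard_insert_of_notMem (by
    intro h
    simp only [Set.mem_insert_iff, Set.mem_singleton_iff] at h
    rcases h with h|h|h
    · exact absurd (congrFun h 2) (by norm_num [Matrix.cons_val_two, Matrix.cons_val_three])
    · exact absurd (congrFun h 3) (by norm_num [Matrix.cons_val_two, Matrix.cons_val_three])
    · exact absurd (congrFun h 0) (by norm_num)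
    )]
  rw [Set.ncard_insert_of_notMem (by
    intro h
    simp only [Set.mem_insert_iff, Set.mem_singleton_iff] at h
    rcases h with h|h
    · exact absurd (congrFun h 2) (by norm_num [Matrix.cons_val_two, Matrix.cons_val_three])
    · exact absurd (congrFun h 0) (by norm_num)
    )]
  rw [Set.ncard_insert_of_notMem (by
    intro h
    simp only [Set.mem_insert_iff, Set.mem_singleton_iff] at h
    exact absurd (congrFun h 0) (by norm_num)
    )]
  rw [Set.ncard_singleton]

def Sprod : Set (ℝ × ℝ × ℝ × ℝ) :=
  {p | p.1 ∈ Icc (0:ℝ) 1 ∧ p.2.1 ∈ Icc (0:ℝ) 1 ∧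
       p.2.2.1 ∈ Icc (0:ℝ) (1 + p.2.1 - p.1) ∧ p.2.2.2 ∈ Icc (0:ℝ) (2 - p.1 - p.2.1)}

lemma Sprod_meas : MeasurableSet Sprod := by
  have m1 : Measurable fun p : ℝ × ℝ × ℝ × ℝ => p.1 := measurable_fst
  have m2 : Measurable fun p : ℝ × ℝ × ℝ × ℝ => p.2.1 := measurable_snd.fst
  have m3 : Measurable fun p : ℝ × ℝ × ℝ × ℝ => p.2.2.1 := measurable_snd.snd.fst
  have m4 : Measurable fun p : ℝ × ℝ × ℝ × ℝ => p.2.2.2 := measurable_snd.snd.snd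
  exact (measurableSet_Icc.preimage m1) |>.inter
    ((measurableSet_Icc.preimage m2) |>.inter
      (((measurableSet_le measurable_const m3).inter
        (measurableSet_le m3 ((measurable_const.add m2).sub m1))).inter
       ((measurableSet_le measurable_const m4).inter
        (measurableSet_le m4 ((measurable_const.sub m1).sub m2)))))

noncomputable def Fmap : (Fin 4 → ℝ) → ℝ × ℝ × ℝ × ℝ := fun a => (a 1, a 3, a 0, a 2)

lemma Fmap_mp : MeasurePreserving Fmap volume volume := by
  have h1 := volume_preserving_piFinSuccAbove (fun _ : Fin 4 => ℝ) 1
  have h2 := volume_preserving_piFinSuccAbove (fun _ : Fin 3 => ℝ) 2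
  have h3 := volume_preserving_piFinTwo (fun _ : Fin 2 => ℝ)
  have hcomp : Fmap =
      (Prod.map id (Prod.map id ⇑(MeasurableEquiv.piFinTwo fun _ : Fin 2 => ℝ))) ∘
      (Prod.map id ⇑(MeasurableEquiv.piFinSuccAbove (fun _ : Fin 3 => ℝ) 2)) ∘
      ⇑(MeasurableEquiv.piFinSuccAbove (fun _ : Fin 4 => ℝ) 1) := by
    funext a
    rfl
  rw [hcomp]
  exact ((MeasurePreserving.id volume).prod ((MeasurePreserving.id volume).prod h3)).comp
    (((MeasurePreserving.id volume).prod h2).comp h1)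

lemma Fmap_pre : Fmap ⁻¹' Sprod = Dset := by
  ext a
  constructor
  · rintro ⟨h1, h2, h3, h4⟩
    refine ⟨fun i => ?_, h1.2, h2.2, h3.2, h4.2⟩
    fin_cases i
    exacts [h3.1, h1.1, h4.1, h2.1]
  · rintro ⟨h0, h1, h2, h3, h4⟩
    exact ⟨⟨h0 1, h1⟩, ⟨h0 3, h2⟩, ⟨h0 0, h3⟩, ⟨h0 2, h4⟩⟩

lemma lint_Icc (f : ℝ → ℝ) (hf : Continuous f) (hnn : ∀ x ∈ Icc (0:ℝ) 1, 0 ≤ f x) :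
    ∫⁻ x in Icc (0:ℝ) 1, ENNReal.ofReal (f x) = ENNReal.ofReal (∫ x in (0:ℝ)..1, f x) := by
  rw [← ofReal_integral_eq_lintegral_ofReal (hf.integrableOn_Icc)
    ((ae_restrict_iff' measurableSet_Icc).2 (ae_of_all _ hnn))]
  rw [MeasureTheory.integral_Icc_eq_integral_Ioc, ← intervalIntegral.integral_of_le (by norm_num : (0:ℝ) ≤ 1)]

lemma integ_inner (b : ℝ) : ∫ d in (0:ℝ)..1, (1+d-b)*(2-b-d) = b^2 - 3*b + 13/6 := by
  have hd : ∀ d : ℝ, HasDerivAt (fun d => (2 - 3*b + b^2)*d + d^2/2 - d^3/3)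
      ((1+d-b)*(2-b-d)) d := by
    intro d
    have h := (((hasDerivAt_id d).const_mul (2 - 3*b + b^2)).add
      ((hasDerivAt_pow 2 d).div_const 2)).sub ((hasDerivAt_pow 3 d).div_const 3)
    refine h.congr_deriv ?_
    ring
  rw [intervalIntegral.integral_eq_sub_of_hasDerivAt (fun x _ => hd x)
    ((by continuity : Continuous fun d : ℝ => (1+d-b)*(2-b-d)).intervalIntegrable 0 1)]
  norm_num
  ring

lemma integ_outer : ∫ b in (0:ℝ)..1, (b^2 - 3*b + 13/6) = 1 := by
  have hd : ∀ b : ℝ, HasDerivAt (fun b : ℝ => b^3/3 - 3*(b^2/2) + 13/6*b)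
      (b^2 - 3*b + 13/6) b := by
    intro b
    have h := (((hasDerivAt_pow 3 b).div_const 3).sub
      (((hasDerivAt_pow 2 b).div_const 2).const_mul 3)).add ((hasDerivAt_id b).const_mul (13/6))
    refine h.congr_deriv ?_
    ring
  rw [intervalIntegral.integral_eq_sub_of_hasDerivAt (fun x _ => hd x)
    ((by continuity : Continuous fun b : ℝ => b^2 - 3*b + 13/6).intervalIntegrable 0 1)]
  norm_num

lemma inner_slice (b : ℝ) (hb : b ∈ Icc (0:ℝ) 1) :
    volume {q : ℝ × ℝ × ℝ | q.1 ∈ Icc (0:ℝ) 1 ∧ q.2.1 ∈ Icc (0:ℝ) (1 + q.1 - b) ∧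
      q.2.2 ∈ Icc (0:ℝ) (2 - b - q.1)} = ENNReal.ofReal (b^2 - 3*b + 13/6) := by
  have m1 : Measurable fun q : ℝ × ℝ × ℝ => q.1 := measurable_fst
  have m2 : Measurable fun q : ℝ × ℝ × ℝ => q.2.1 := measurable_snd.fst
  have m3 : Measurable fun q : ℝ × ℝ × ℝ => q.2.2 := measurable_snd.snd
  have hms : MeasurableSet {q : ℝ × ℝ × ℝ | q.1 ∈ Icc (0:ℝ) 1 ∧
      q.2.1 ∈ Icc (0:ℝ) (1 + q.1 - b) ∧ q.2.2 ∈ Icc (0:ℝ) (2 - b - q.1)} :=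
    (measurableSet_Icc.preimage m1) |>.inter
      (((measurableSet_le measurable_const m2).inter
        (measurableSet_le m2 ((measurable_const.add m1).sub measurable_const))).inter
       ((measurableSet_le measurable_const m3).inter
        (measurableSet_le m3 ((measurable_const.sub measurable_const).sub m1))))
  rw [Measure.volume_eq_prod, Measure.prod_apply hms]
  have hpt : ∀ d : ℝ, (volume : Measure (ℝ × ℝ))
      (Prod.mk d ⁻¹' {q : ℝ × ℝ × ℝ | q.1 ∈ Icc (0:ℝ) 1 ∧
        q.2.1 ∈ Icc (0:ℝ) (1 + q.1 - b) ∧ q.2.2 ∈ Icc (0:ℝ) (2 - b - q.1)}) =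
      (Icc (0:ℝ) 1).indicator (fun d => ENNReal.ofReal ((1+d-b)*(2-b-d))) d := by
    intro d
    by_cases hd : d ∈ Icc (0:ℝ) 1
    · rw [indicator_of_mem hd]
      have hset : Prod.mk d ⁻¹' {q : ℝ × ℝ × ℝ | q.1 ∈ Icc (0:ℝ) 1 ∧
          q.2.1 ∈ Icc (0:ℝ) (1 + q.1 - b) ∧ q.2.2 ∈ Icc (0:ℝ) (2 - b - q.1)} =
          Icc (0:ℝ) (1+d-b) ×ˢ Icc (0:ℝ) (2-b-d) := by
        ext r
        simp only [Set.mem_preimage, Set.mem_setOf_eq, Set.mem_prod, Set.mem_Icc]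
        constructor
        · rintro ⟨-, h2, h3⟩
          exact ⟨h2, h3⟩
        · rintro ⟨h2, h3⟩
          exact ⟨⟨hd.1, hd.2⟩, h2, h3⟩
      rw [hset, Measure.volume_eq_prod, Measure.prod_prod, Real.volume_Icc, Real.volume_Icc]
      rw [sub_zero, sub_zero, ← ENNReal.ofReal_mul (by linarith [hb.1, hb.2, hd.1, hd.2] : (0:ℝ) ≤ 1+d-b)]
    · rw [indicator_of_notMem hd]
      have hset : Prod.mk d ⁻¹' {q : ℝ × ℝ × ℝ | q.1 ∈ Icc (0:ℝ) 1 ∧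
          q.2.1 ∈ Icc (0:ℝ) (1 + q.1 - b) ∧ q.2.2 ∈ Icc (0:ℝ) (2 - b - q.1)} = ∅ :=
        Set.eq_empty_iff_forall_notMem.2 (fun r hr => hd hr.1)
      rw [hset]
      exact measure_empty
  rw [lintegral_congr hpt, lintegral_indicator measurableSet_Icc,
    lint_Icc _ (by continuity) (fun d hd => mul_nonneg
      (by obtain ⟨h1,h2⟩ := hb; obtain ⟨h3,h4⟩ := hd; linarith)
      (by obtain ⟨h1,h2⟩ := hb; obtain ⟨h3,h4⟩ := hd; linarith)),
    integ_inner b]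

lemma vol_Sprod : (volume : Measure (ℝ × ℝ × ℝ × ℝ)) Sprod = 1 := by
  rw [Measure.volume_eq_prod, Measure.prod_apply Sprod_meas]
  have hpt : ∀ b : ℝ, (volume : Measure (ℝ × ℝ × ℝ)) (Prod.mk b ⁻¹' Sprod) =
      (Icc (0:ℝ) 1).indicator (fun b => ENNReal.ofReal (b^2 - 3*b + 13/6)) b := by
    intro b
    by_cases hb : b ∈ Icc (0:ℝ) 1
    · rw [indicator_of_mem hb]
      have hpre : Prod.mk b ⁻¹' Sprod = {q : ℝ × ℝ × ℝ | q.1 ∈ Icc (0:ℝ) 1 ∧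
          q.2.1 ∈ Icc (0:ℝ) (1 + q.1 - b) ∧ q.2.2 ∈ Icc (0:ℝ) (2 - b - q.1)} := by
        ext q
        constructor
        · rintro ⟨-, h2, h3, h4⟩
          exact ⟨h2, h3, h4⟩
        · rintro ⟨h2, h3, h4⟩
          exact ⟨hb, h2, h3, h4⟩
      rw [hpre, inner_slice b hb]
    · rw [indicator_of_notMem hb]
      have hpre : Prod.mk b ⁻¹' Sprod = ∅ :=
        Set.eq_empty_iff_forall_notMem.2 (fun q hq => hb hq.1)
      rw [hpre]
      exact measure_empty
  rw [lintegral_congr hpt, lintegral_indicator measurableSet_Icc,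
    lint_Icc _ (by continuity) (fun b hb => by nlinarith [hb.1, hb.2, sq_nonneg (b-1)]),
    integ_outer]
  norm_num

lemma vol_Dset : (volume : Measure (Fin 4 → ℝ)) Dset = 1 := by
  rw [← Fmap_pre, Fmap_mp.measure_preimage Sprod_meas.nullMeasurableSet, vol_Sprod]

/-- The polytope `Δ ⊆ ℝ⁴` given by `a_i ≥ 0`, `a₂ ≤ 1`, `a₄ ≤ 1`, `a₁ ≤ 1 + a₄ - a₂`,
`a₃ ≤ 2 - a₂ - a₄` is integral (all its vertices are lattice points), has exactly `12`
vertices, and has Euclidean volume `1`. -/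
theorem stmt16 :
    let D : Set (Fin 4 → ℝ) := {a | (∀ i, 0 ≤ a i) ∧ a 1 ≤ 1 ∧ a 3 ≤ 1 ∧
      a 0 ≤ 1 + a 3 - a 1 ∧ a 2 ≤ 2 - a 1 - a 3}
    (∀ x ∈ Set.extremePoints ℝ D, ∀ i, ∃ z : ℤ, x i = (z : ℝ)) ∧
    (Set.extremePoints ℝ D).ncard = 12 ∧
    MeasureTheory.volume D = 1 := by
  intro D
  have hD : D = Dset := rfl
  refine ⟨?_, ?_, ?_⟩
  · intro x hx i
    rw [hD, extreme_eq] at hx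
    simp only [VS, Set.mem_insert_iff, Set.mem_singleton_iff] at hx
    rcases hx with rfl|rfl|rfl|rfl|rfl|rfl|rfl|rfl|rfl|rfl|rfl|rfl
    · fin_cases i
      exacts [⟨0, by norm_num⟩, ⟨0, by norm_num⟩, ⟨0, by norm_num⟩, ⟨0, by norm_num⟩]
    · fin_cases i
      exacts [⟨1, by norm_num⟩, ⟨0, by norm_num⟩, ⟨0, by norm_num⟩, ⟨0, by norm_num⟩]
    · fin_cases i
      exacts [⟨0, by norm_num⟩, ⟨0, by norm_num⟩, ⟨2, by norm_num⟩, ⟨0, by norm_num⟩]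
    · fin_cases i
      exacts [⟨1, by norm_num⟩, ⟨0, by norm_num⟩, ⟨2, by norm_num⟩, ⟨0, by norm_num⟩]
    · fin_cases i
      exacts [⟨0, by norm_num⟩, ⟨0, by norm_num⟩, ⟨0, by norm_num⟩, ⟨1, by norm_num⟩]
    · fin_cases i
      exacts [⟨2, by norm_num⟩, ⟨0, by norm_num⟩, ⟨0, by norm_num⟩, ⟨1, by norm_num⟩]
    · fin_cases i
      exacts [⟨0, by norm_num⟩, ⟨0, by norm_num⟩, ⟨1, by norm_num⟩, ⟨1, by norm_num⟩]
    · fin_cases i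
      exacts [⟨2, by norm_num⟩, ⟨0, by norm_num⟩, ⟨1, by norm_num⟩, ⟨1, by norm_num⟩]
    · fin_cases i
      exacts [⟨0, by norm_num⟩, ⟨1, by norm_num⟩, ⟨0, by norm_num⟩, ⟨0, by norm_num⟩]
    · fin_cases i
      exacts [⟨0, by norm_num⟩, ⟨1, by norm_num⟩, ⟨1, by norm_num⟩, ⟨0, by norm_num⟩]
    · fin_cases i
      exacts [⟨0, by norm_num⟩, ⟨1, by norm_num⟩, ⟨0, by norm_num⟩, ⟨1, by norm_num⟩]
    · fin_cases i
      exacts [⟨1, by norm_num⟩, ⟨1, by norm_num⟩, ⟨0, by norm_num⟩, ⟨1, by norm_num⟩]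
  · rw [hD, extreme_eq]
    exact VS_ncard
  · rw [hD]
    exact vol_Dset
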